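/- Let ν be a Lebesgue-absolutely continuous probability measure on ℝ^d and γ ∈ Γ, where Γ is the set of step sizes for which the lazy-SGD Markov kernel P_γ maps Lebesgue-absolutely continuous measures to Lebesgue-absolutely continuous measures. Then any two SGD sequences (x_n) and (x'_n) with step γ, started at the same x₀ ∼ ν and driven by the same i.i.d. noise, are ℙ^ν-almost surely equal, and for each n the law of x_n under ℙ^ν is Lebesgue-absolutely continuous. -/

import Mathlib

open MeasureTheory Filter Set ProbabilityTheory
open scoped Classical


noncomputable def dqGrad {d : ℕ} {Ξ : Type*}
    (f : EuclideanSpace ℝ (Fin d) × Ξ → ℝ)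
    (p : EuclideanSpace ℝ (Fin d) × Ξ) : EuclideanSpace ℝ (Fin d) :=
  WithLp.toLp 2 fun i => Filter.liminf (fun k : ℕ =>
    ((k : ℝ) + 1) * (f (p.1 + ((k : ℝ) + 1)⁻¹ • EuclideanSpace.single i 1, p.2) - f p)) Filter.atTop

theorem dqGrad_measurable {d : ℕ} {Ξ : Type*} [MeasurableSpace Ξ]
    {f : EuclideanSpace ℝ (Fin d) × Ξ → ℝ} (hf : Measurable f) :
    Measurable (dqGrad f) := by
  unfold dqGrad
  apply (WithLp.measurable_toLp 2 _).comp
  apply measurable_pi_lambda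
  intro i
  apply Measurable.liminf
  intro k
  apply Measurable.mul measurable_const
  apply Measurable.sub _ hf
  exact hf.comp ((measurable_fst.add_const _).prodMk measurable_snd)

theorem dqGrad_eq {d : ℕ} {Ξ : Type*}
    {f : EuclideanSpace ℝ (Fin d) × Ξ → ℝ} {x v : EuclideanSpace ℝ (Fin d)} {s : Ξ}
    (h : HasGradientAt (fun y => f (y, s)) v x) : dqGrad f (x, s) = v := by
  ext i
  have hF : HasFDerivAt (fun y => f (y, s)) (InnerProductSpace.toDual ℝ _ v) x :=
    h.hasFDerivAt
  set e : EuclideanSpace ℝ (Fin d) := EuclideanSpace.single i 1 with he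
  have hline : HasDerivAt (fun t : ℝ => x + t • e) e 0 := by
    simpa using ((hasDerivAt_id (0 : ℝ)).smul_const e).const_add x
  have hcomp : HasDerivAt (fun t : ℝ => f (x + t • e, s)) (v i) 0 := by
    have h0 : x + (0 : ℝ) • e = x := by simp
    rw [← h0] at hF
    have hval : (InnerProductSpace.toDual ℝ (EuclideanSpace ℝ (Fin d))) v e = v i := by
      rw [InnerProductSpace.toDual_apply_apply, he, EuclideanSpace.inner_single_right]
      simp
    have hc := hF.comp_hasDerivAt (0 : ℝ) hline
    rw [hval] at hc
    simpa [Function.comp_def] using hc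
  have hslope := hcomp.tendsto_slope_zero
  have hu : Tendsto (fun k : ℕ => ((k : ℝ) + 1)⁻¹) atTop (nhdsWithin 0 {(0:ℝ)}ᶜ) := by
    apply tendsto_nhdsWithin_of_tendsto_nhds_of_eventually_within
    · simpa [one_div] using tendsto_one_div_add_atTop_nhds_zero_nat (𝕜 := ℝ)
    · filter_upwards with k
      simp only [mem_compl_iff, mem_singleton_iff]
      positivity
  have hlim : Tendsto (fun k : ℕ =>
      ((k : ℝ) + 1) * (f (x + ((k : ℝ) + 1)⁻¹ • e, s) - f (x, s))) atTop (nhds (v i)) := by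
    have := hslope.comp hu
    simp only [Function.comp_def] at this
    convert this using 2 with k
    have hk : ((k : ℝ) + 1)⁻¹⁻¹ = (k : ℝ) + 1 := inv_inv _
    simp [smul_eq_mul, zero_add, zero_smul, hk, mul_comm]
  exact hlim.liminf_eq



theorem law_pair {Ξ E E₂ : Type*} [MeasurableSpace Ξ] [MeasurableSpace E] [MeasurableSpace E₂]
    {Ω : Type*} [MeasureSpace Ω] [IsProbabilityMeasure (volume : Measure Ω)]
    (μ : Measure Ξ) [IsProbabilityMeasure μ]
    (x0 : Ω → E) (ξ : ℕ → Ω → Ξ)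
    (hx0m : Measurable x0) (hξm : ∀ n, Measurable (ξ n))
    (hξlaw : ∀ n, Measure.map (ξ n) (volume : Measure Ω) = μ)
    (hindep : IndepFun x0 (fun ω n => ξ n ω) (volume : Measure Ω))
    (hiid : iIndepFun ξ (volume : Measure Ω))
    (n : ℕ) (F : E × (Fin n → Ξ) → E₂) (hF : Measurable F) :
    Measure.map (fun ω => (F (x0 ω, fun i : Fin n => ξ (i.1 + 1) ω), ξ (n + 1) ω))
        (volume : Measure Ω)
      = (Measure.map (fun ω => F (x0 ω, fun i : Fin n => ξ (i.1 + 1) ω))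
          (volume : Measure Ω)).prod μ := by
  classical
  set B : Ω → (Fin n → Ξ) := fun ω => fun i : Fin n => ξ (i.1 + 1) ω with hB
  have hBm : Measurable B := measurable_pi_lambda _ fun i => hξm _
  have hCm : Measurable (ξ (n + 1)) := hξm _
  have hBC : IndepFun B (ξ (n + 1)) (volume : Measure Ω) := by
    set S : Finset ℕ := (Finset.range n).image (· + 1) with hS
    have hdisj : Disjoint S ({n + 1} : Finset ℕ) := by
      simp only [Finset.disjoint_singleton_right, hS, Finset.mem_image, Finset.mem_range]
      rintro ⟨i, hi, hin⟩
      omega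
    have h1 := hiid.indepFun_finset S {n + 1} hdisj hξm
    have hmem : ∀ i : Fin n, (i.1 + 1) ∈ S := fun i =>
      Finset.mem_image.2 ⟨i.1, Finset.mem_range.2 i.2, rfl⟩
    exact h1.comp (φ := fun w : S → Ξ => fun i : Fin n => w ⟨i.1 + 1, hmem i⟩)
      (ψ := fun w : ({n + 1} : Finset ℕ) → Ξ => w ⟨n + 1, Finset.mem_singleton_self _⟩)
      (measurable_pi_lambda _ fun i => measurable_pi_apply _) (measurable_pi_apply _)
  have hBClaw : Measure.map (fun ω => (B ω, ξ (n + 1) ω)) (volume : Measure Ω)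
      = (Measure.map B (volume : Measure Ω)).prod μ := by
    rw [← hξlaw (n + 1)]
    exact (indepFun_iff_map_prod_eq_prod_map_map hBm.aemeasurable hCm.aemeasurable).mp hBC
  have hx0BC : IndepFun x0 (fun ω => (B ω, ξ (n + 1) ω)) (volume : Measure Ω) :=
    hindep.comp (φ := id)
      (ψ := fun v : ℕ → Ξ => ((fun i : Fin n => v (i.1 + 1)), v (n + 1)))
      measurable_id
      ((measurable_pi_lambda _ fun i => measurable_pi_apply _).prodMk (measurable_pi_apply _))
  have hx0B : IndepFun x0 B (volume : Measure Ω) :=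
    hindep.comp (φ := id) (ψ := fun v : ℕ → Ξ => fun i : Fin n => v (i.1 + 1))
      measurable_id (measurable_pi_lambda _ fun i => measurable_pi_apply _)
  haveI : IsProbabilityMeasure (Measure.map x0 (volume : Measure Ω)) :=
    Measure.isProbabilityMeasure_map hx0m.aemeasurable
  haveI : IsProbabilityMeasure (Measure.map B (volume : Measure Ω)) :=
    Measure.isProbabilityMeasure_map hBm.aemeasurable
  have htriple : Measure.map (fun ω => (x0 ω, (B ω, ξ (n + 1) ω))) (volume : Measure Ω)
      = (Measure.map x0 (volume : Measure Ω)).prod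
          ((Measure.map B (volume : Measure Ω)).prod μ) := by
    rw [(indepFun_iff_map_prod_eq_prod_map_map hx0m.aemeasurable
      (hBm.prodMk hCm).aemeasurable).mp hx0BC, hBClaw]
  have hZlaw : Measure.map (fun ω => (x0 ω, B ω)) (volume : Measure Ω)
      = (Measure.map x0 (volume : Measure Ω)).prod (Measure.map B (volume : Measure Ω)) :=
    (indepFun_iff_map_prod_eq_prod_map_map hx0m.aemeasurable hBm.aemeasurable).mp hx0B
  have hpairlaw : Measure.map (fun ω => ((x0 ω, B ω), ξ (n + 1) ω)) (volume : Measure Ω)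
      = ((Measure.map x0 (volume : Measure Ω)).prod
          (Measure.map B (volume : Measure Ω))).prod μ := by
    have he : (fun ω => ((x0 ω, B ω), ξ (n + 1) ω))
        = fun ω => (MeasurableEquiv.prodAssoc
            (α := E) (β := Fin n → Ξ) (γ := Ξ)).symm (x0 ω, (B ω, ξ (n + 1) ω)) := rfl
    rw [he, show (fun ω => (MeasurableEquiv.prodAssoc
          (α := E) (β := Fin n → Ξ) (γ := Ξ)).symm (x0 ω, (B ω, ξ (n + 1) ω)))
        = ⇑(MeasurableEquiv.prodAssoc (α := E) (β := Fin n → Ξ) (γ := Ξ)).symm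
            ∘ (fun ω => (x0 ω, (B ω, ξ (n + 1) ω))) from rfl,
      ← Measure.map_map (MeasurableEquiv.prodAssoc
        (α := E) (β := Fin n → Ξ) (γ := Ξ)).symm.measurable
        (hx0m.prodMk (hBm.prodMk hCm)), htriple, ← Measure.prodAssoc_prod,
      MeasurableEquiv.map_symm_map]
  have hstep : (fun ω => (F (x0 ω, B ω), ξ (n + 1) ω))
      = (Prod.map F id) ∘ (fun ω => ((x0 ω, B ω), ξ (n + 1) ω)) := rfl
  calc Measure.map (fun ω => (F (x0 ω, B ω), ξ (n + 1) ω)) (volume : Measure Ω)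
      = Measure.map (Prod.map F id)
          (Measure.map (fun ω => ((x0 ω, B ω), ξ (n + 1) ω)) (volume : Measure Ω)) := by
        rw [hstep, ← Measure.map_map (hF.prodMap measurable_id)
          ((hx0m.prodMk hBm).prodMk hCm)]
    _ = Measure.map (Prod.map F id)
          (((Measure.map x0 (volume : Measure Ω)).prod
            (Measure.map B (volume : Measure Ω))).prod μ) := by rw [hpairlaw]
    _ = (Measure.map F ((Measure.map x0 (volume : Measure Ω)).prod
            (Measure.map B (volume : Measure Ω)))).prod (Measure.map id μ) :=
        (Measure.map_prod_map _ _ hF measurable_id).symm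
    _ = (Measure.map (fun ω => F (x0 ω, B ω)) (volume : Measure Ω)).prod μ := by
        rw [Measure.map_id, ← hZlaw,
          Measure.map_map hF (hx0m.prodMk hBm)]
        rfl


/-- The lazy a.e. gradient `φ₀(x,s)`: gradient of `f(·,s)` at `x` if it exists, else `0`. -/
noncomputable def lazyGrad {d : ℕ} {Ξ : Type*}
    (f : EuclideanSpace ℝ (Fin d) × Ξ → ℝ)
    (x : EuclideanSpace ℝ (Fin d)) (s : Ξ) : EuclideanSpace ℝ (Fin d) :=
  if DifferentiableAt ℝ (fun y => f (y, s)) x then gradient (fun y => f (y, s)) x else 0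

/-- `φ` is an a.e. gradient of `f`: for `λ ⊗ μ`-a.e. `(x,s)`, `f(·,s)` has gradient
`φ(x,s)` at `x`. -/
def IsAEGradient {d : ℕ} {Ξ : Type*} [MeasurableSpace Ξ] (μ : Measure Ξ)
    (f : EuclideanSpace ℝ (Fin d) × Ξ → ℝ)
    (φ : EuclideanSpace ℝ (Fin d) × Ξ → EuclideanSpace ℝ (Fin d)) : Prop :=
  ∀ᵐ p ∂((volume : Measure (EuclideanSpace ℝ (Fin d))).prod μ),
    HasGradientAt (fun y => f (y, p.2)) (φ p) p.1

/-- `γ ∈ Γ`: the lazy-SGD kernel `P_γ` maps Lebesgue-absolutely continuous probability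
measures to Lebesgue-absolutely continuous measures. -/
def StepOK {d : ℕ} {Ξ : Type*} [MeasurableSpace Ξ] (μ : Measure Ξ)
    (f : EuclideanSpace ℝ (Fin d) × Ξ → ℝ) (γ : ℝ) : Prop :=
  ∀ ρ : Measure (EuclideanSpace ℝ (Fin d)), IsProbabilityMeasure ρ → ρ ≪ volume →
    (ρ.prod μ).map (fun p => p.1 - γ • lazyGrad f p.1 p.2) ≪ volume

/-- for `γ ∈ Γ` and an absolutely continuous initialization `x₀ ∼ ν`, any
two SGD sequences with step `γ` (built from possibly different a.e. gradients, but the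
same initialization and the same i.i.d. noise) are a.s. equal, each iterate is
measurable for the completed σ-algebra (i.e. a.e.-measurable) and its law is
Lebesgue-absolutely continuous. -/
theorem stmt5 {d : ℕ} {Ξ : Type*} [MeasurableSpace Ξ]
    (μ : Measure Ξ) [IsProbabilityMeasure μ]
    (f : EuclideanSpace ℝ (Fin d) × Ξ → ℝ)
    (hf : Measurable f)
    (hlip : ∀ s : Ξ, LocallyLipschitz (fun y => f (y, s)))
    (γ : ℝ) (hγpos : 0 < γ) (hγ : StepOK μ f γ)
    (ν : Measure (EuclideanSpace ℝ (Fin d))) [IsProbabilityMeasure ν] (hν : ν ≪ volume)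
    {Ω : Type*} [MeasureSpace Ω] [IsProbabilityMeasure (volume : Measure Ω)]
    (x0 : Ω → EuclideanSpace ℝ (Fin d)) (ξ : ℕ → Ω → Ξ)
    (hx0m : Measurable x0) (hξm : ∀ n, Measurable (ξ n))
    (hx0law : Measure.map x0 (volume : Measure Ω) = ν) (hξlaw : ∀ n, Measure.map (ξ n) (volume : Measure Ω) = μ)
    (hindep : ProbabilityTheory.IndepFun x0 (fun ω n => ξ n ω) (volume : Measure Ω))
    (hiid : ProbabilityTheory.iIndepFun ξ (volume : Measure Ω))
    (x x' : ℕ → Ω → EuclideanSpace ℝ (Fin d))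
    (φ ψ : EuclideanSpace ℝ (Fin d) × Ξ → EuclideanSpace ℝ (Fin d))
    (hφ : IsAEGradient μ f φ) (hψ : IsAEGradient μ f ψ)
    (hx0eq : x 0 = x0) (hx'0eq : x' 0 = x0)
    (hx : ∀ n ω, x (n + 1) ω = x n ω - γ • φ (x n ω, ξ (n + 1) ω))
    (hx' : ∀ n ω, x' (n + 1) ω = x' n ω - γ • ψ (x' n ω, ξ (n + 1) ω)) :
    (∀ᵐ ω ∂(volume : Measure Ω), ∀ n, x n ω = x' n ω) ∧
      ∀ n, AEMeasurable (x n) (volume : Measure Ω) ∧ Measure.map (x n) (volume : Measure Ω) ≪ (volume : Measure (EuclideanSpace ℝ (Fin d))) := by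
  have hgmeas : Measurable (dqGrad f) := dqGrad_measurable hf
  set g := dqGrad f with hgdef
  have hφ' : ∀ᵐ p ∂((volume : Measure (EuclideanSpace ℝ (Fin d))).prod μ),
      HasGradientAt (fun y => f (y, p.2)) (φ p) p.1 := hφ
  have hψ' : ∀ᵐ p ∂((volume : Measure (EuclideanSpace ℝ (Fin d))).prod μ),
      HasGradientAt (fun y => f (y, p.2)) (ψ p) p.1 := hψ
  have hQ : ∀ᵐ p ∂((volume : Measure (EuclideanSpace ℝ (Fin d))).prod μ),
      g p = φ p ∧ g p = ψ p ∧
        p.1 - γ • lazyGrad f p.1 p.2 = p.1 - γ • g p := by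
    filter_upwards [hφ', hψ'] with p h1 h2
    have e1 : g p = φ p := dqGrad_eq h1
    have e2 : g p = ψ p := dqGrad_eq h2
    have hd : DifferentiableAt ℝ (fun y => f (y, p.2)) p.1 := h1.differentiableAt
    have e3 : lazyGrad f p.1 p.2 = φ p := by
      rw [lazyGrad, if_pos hd, h1.gradient]
    exact ⟨e1, e2, by rw [e3, e1]⟩
  let y : ℕ → Ω → EuclideanSpace ℝ (Fin d) := fun n =>
    Nat.rec (motive := fun _ => Ω → EuclideanSpace ℝ (Fin d)) x0
      (fun n yn => fun ω => yn ω - γ • g (yn ω, ξ (n + 1) ω)) n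
  have hy0 : y 0 = x0 := rfl
  have hys : ∀ n ω, y (n + 1) ω = y n ω - γ • g (y n ω, ξ (n + 1) ω) := fun n ω => rfl
  have hymeas : ∀ n, Measurable (y n) := by
    intro n; induction n with
    | zero => exact hx0m
    | succ n ih => exact ih.sub ((hgmeas.comp (ih.prodMk (hξm (n + 1)))).const_smul γ)
  have hrep : ∀ n, ∃ F : EuclideanSpace ℝ (Fin d) × (Fin n → Ξ) → EuclideanSpace ℝ (Fin d),
      Measurable F ∧ ∀ ω, y n ω = F (x0 ω, fun i : Fin n => ξ (i.1 + 1) ω) := by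
    intro n; induction n with
    | zero => exact ⟨Prod.fst, measurable_fst, fun ω => rfl⟩
    | succ n ih =>
      obtain ⟨F, hFm, hFeq⟩ := ih
      have hr : Measurable fun q : EuclideanSpace ℝ (Fin d) × (Fin (n + 1) → Ξ) =>
          F (q.1, fun i : Fin n => q.2 i.castSucc) :=
        hFm.comp (measurable_fst.prodMk
          (measurable_pi_lambda _ fun i => (measurable_pi_apply _).comp measurable_snd))
      refine ⟨fun q => F (q.1, fun i : Fin n => q.2 i.castSucc)
          - γ • g (F (q.1, fun i : Fin n => q.2 i.castSucc), q.2 (Fin.last n)), ?_, ?_⟩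
      · exact hr.sub ((hgmeas.comp
          (hr.prodMk ((measurable_pi_apply _).comp measurable_snd))).const_smul γ)
      · intro ω
        rw [hys n ω, hFeq ω]
        rfl
  have hlaw : ∀ n, Measure.map (fun ω => (y n ω, ξ (n + 1) ω)) (volume : Measure Ω)
      = (Measure.map (y n) (volume : Measure Ω)).prod μ := by
    intro n
    obtain ⟨F, hFm, hFeq⟩ := hrep n
    have h1 := law_pair μ x0 ξ hx0m hξm hξlaw hindep hiid n F hFm
    have e1 : (fun ω => (F (x0 ω, fun i : Fin n => ξ (i.1 + 1) ω), ξ (n + 1) ω))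
        = fun ω => (y n ω, ξ (n + 1) ω) := by funext ω; rw [hFeq ω]
    have e2 : (fun ω => F (x0 ω, fun i : Fin n => ξ (i.1 + 1) ω)) = y n := by
      funext ω; rw [hFeq ω]
    rw [e1, e2] at h1
    exact h1
  have main : ∀ n, Measure.map (y n) (volume : Measure Ω) ≪ volume ∧
      (∀ᵐ ω ∂(volume : Measure Ω), x n ω = y n ω) ∧
      (∀ᵐ ω ∂(volume : Measure Ω), x' n ω = y n ω) := by
    intro n; induction n with
    | zero =>
      refine ⟨?_, ?_, ?_⟩
      · rw [hy0, hx0law]; exact hν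
      · filter_upwards with ω
        rw [hx0eq, hy0]
      · filter_upwards with ω
        rw [hx'0eq, hy0]
    | succ n ih =>
      obtain ⟨hac, hxn, hx'n⟩ := ih
      haveI : IsProbabilityMeasure (Measure.map (y n) (volume : Measure Ω)) :=
        Measure.isProbabilityMeasure_map (hymeas n).aemeasurable
      have hprodac : (Measure.map (y n) (volume : Measure Ω)).prod μ
          ≪ ((volume : Measure (EuclideanSpace ℝ (Fin d))).prod μ) :=
        Measure.AbsolutelyContinuous.prod hac (Measure.AbsolutelyContinuous.refl μ)
      have hQn : ∀ᵐ p ∂((Measure.map (y n) (volume : Measure Ω)).prod μ),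
          g p = φ p ∧ g p = ψ p ∧
            p.1 - γ • lazyGrad f p.1 p.2 = p.1 - γ • g p := hQ.filter_mono hprodac.ae_le
      have hJm : Measurable fun ω => (y n ω, ξ (n + 1) ω) := (hymeas n).prodMk (hξm _)
      have hQω : ∀ᵐ ω ∂(volume : Measure Ω),
          g (y n ω, ξ (n + 1) ω) = φ (y n ω, ξ (n + 1) ω) ∧
          g (y n ω, ξ (n + 1) ω) = ψ (y n ω, ξ (n + 1) ω) ∧
          y n ω - γ • lazyGrad f (y n ω) (ξ (n + 1) ω)
            = y n ω - γ • g (y n ω, ξ (n + 1) ω) := by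
        have hQn' : ∀ᵐ p ∂(Measure.map (fun ω => (y n ω, ξ (n + 1) ω)) (volume : Measure Ω)),
            g p = φ p ∧ g p = ψ p ∧
              p.1 - γ • lazyGrad f p.1 p.2 = p.1 - γ • g p := by
          rw [hlaw n]; exact hQn
        exact ae_of_ae_map hJm.aemeasurable hQn'
      refine ⟨?_, ?_, ?_⟩
      · have hy1 : y (n + 1) = (fun p : EuclideanSpace ℝ (Fin d) × Ξ => p.1 - γ • g p)
            ∘ (fun ω => (y n ω, ξ (n + 1) ω)) := by
          funext ω; exact hys n ω
        have hGm : Measurable fun p : EuclideanSpace ℝ (Fin d) × Ξ => p.1 - γ • g p :=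
          measurable_fst.sub (hgmeas.const_smul γ)
        rw [hy1, ← Measure.map_map hGm hJm, hlaw n]
        have hcongr : Measure.map
              (fun p : EuclideanSpace ℝ (Fin d) × Ξ => p.1 - γ • lazyGrad f p.1 p.2)
              ((Measure.map (y n) (volume : Measure Ω)).prod μ)
            = Measure.map (fun p : EuclideanSpace ℝ (Fin d) × Ξ => p.1 - γ • g p)
              ((Measure.map (y n) (volume : Measure Ω)).prod μ) :=
          Measure.map_congr (hQn.mono fun p hp => hp.2.2)
        rw [← hcongr]
        exact hγ _ inferInstance hac
      · filter_upwards [hxn, hQω] with ω h1 h2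
        rw [hx n ω, h1, hys n ω, ← h2.1]
      · filter_upwards [hx'n, hQω] with ω h1 h2
        rw [hx' n ω, h1, hys n ω, ← h2.2.1]
  refine ⟨?_, ?_⟩
  · rw [ae_all_iff]
    intro n
    filter_upwards [(main n).2.1, (main n).2.2] with ω h1 h2
    rw [h1, h2]
  · intro n
    have hxy : x n =ᵐ[(volume : Measure Ω)] y n := (main n).2.1
    refine ⟨(hymeas n).aemeasurable.congr hxy.symm, ?_⟩
    rw [Measure.map_congr hxy]
    exact (main n).1
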